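/- Let E and F be n×n idempotent matrices with nonnegative real entries such that every entry of EF - FE is nonnegative. Then (EF)²E = EFE. -/
import Mathlib

private lemma mul_mono_left {n : ℕ} (C A B : Matrix (Fin n) (Fin n) ℝ)
    (hC : ∀ i j, 0 ≤ C i j) (h : ∀ i j, A i j ≤ B i j) :
    ∀ i j, (C * A) i j ≤ (C * B) i j := by
  intro i j
  simp only [Matrix.mul_apply]
  exact Finset.sum_le_sum fun k _ => mul_le_mul_of_nonneg_left (h k j) (hC i k)

private lemma mul_mono_right {n : ℕ} (A B C : Matrix (Fin n) (Fin n) ℝ)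
    (hC : ∀ i j, 0 ≤ C i j) (h : ∀ i j, A i j ≤ B i j) :
    ∀ i j, (A * C) i j ≤ (B * C) i j := by
  intro i j
  simp only [Matrix.mul_apply]
  exact Finset.sum_le_sum fun k _ => mul_le_mul_of_nonneg_right (h i k) (hC k j)

private lemma mul_nonneg' {n : ℕ} (A B : Matrix (Fin n) (Fin n) ℝ)
    (hA : ∀ i j, 0 ≤ A i j) (hB : ∀ i j, 0 ≤ B i j) :
    ∀ i j, 0 ≤ (A * B) i j := by
  intro i j
  simp only [Matrix.mul_apply]
  exact Finset.sum_nonneg fun k _ => mul_nonneg (hA i k) (hB k j)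

theorem stmt_0 (n : ℕ) (E F : Matrix (Fin n) (Fin n) ℝ)
    (hE : E * E = E) (hF : F * F = F)
    (hEpos : ∀ i j, 0 ≤ E i j) (hFpos : ∀ i j, 0 ≤ F i j)
    (hcomm : ∀ i j, (F * E) i j ≤ (E * F) i j) :
    (E * F) * (E * F) * E = E * F * E := by
  have hEF : ∀ i j, 0 ≤ (E * F) i j := mul_nonneg' E F hEpos hFpos
  have hFE : ∀ i j, 0 ≤ (F * E) i j := mul_nonneg' F E hFpos hEpos
  -- lower bound: EFE = (EF)(FE)E ≤ (EF)(EF)E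
  have h1 : ∀ i j, (E * F * E) i j ≤ ((E * F) * (E * F) * E) i j := by
    have step : ∀ i j, ((E * F) * (F * E)) i j ≤ ((E * F) * (E * F)) i j :=
      mul_mono_left (E * F) (F * E) (E * F) hEF hcomm
    have step2 : ∀ i j, ((E * F) * (F * E) * E) i j ≤ ((E * F) * (E * F) * E) i j :=
      mul_mono_right _ _ E hEpos step
    have eq1 : (E * F) * (F * E) * E = E * F * E := by
      calc (E * F) * (F * E) * E = E * (F * F) * (E * E) := by noncomm_ring
        _ = E * F * E := by rw [hF, hE]
    intro i j; rw [← eq1]; exact step2 i j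
  -- upper bound: (EF)(EF)E = (E(FE))(FE) ≤ (E(EF))(FE) = EFE
  have h2 : ∀ i j, ((E * F) * (E * F) * E) i j ≤ (E * F * E) i j := by
    have step : ∀ i j, (E * (F * E)) i j ≤ (E * (E * F)) i j :=
      mul_mono_left E (F * E) (E * F) hEpos hcomm
    have step2 : ∀ i j, ((E * (F * E)) * (F * E)) i j ≤ ((E * (E * F)) * (F * E)) i j :=
      mul_mono_right _ _ (F * E) hFE step
    have eq1 : (E * (F * E)) * (F * E) = (E * F) * (E * F) * E := by noncomm_ring
    have eq2 : (E * (E * F)) * (F * E) = E * F * E := by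
      calc (E * (E * F)) * (F * E) = (E * E) * (F * F) * E := by noncomm_ring
        _ = E * F * E := by rw [hE, hF]
    intro i j; rw [← eq1, ← eq2]; exact step2 i j
  ext i j
  exact le_antisymm (h2 i j) (h1 i j)
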